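/- Commutator kernel identity and bound (Lemma lem_exp_06 in kernel form): let ξ ∈ C¹(ℝ³; ℝ) be bounded and let φ : ℝ³ → ℂ be measurable, such that all the integrals below converge absolutely. Then Q(ξ²φ, φ) − Q(ξφ, ξφ) = −(1/(4π²)) ∬_{ℝ³×ℝ³} (K₂(|x−y|)/|x−y|²) (ξ(x) − ξ(y))² Re( conj(φ(x)) φ(y) ) dx dy, and consequently | Q(ξ²φ, φ) − Q(ξφ, ξφ) | ≤ (1/(4π²)) ∬_{ℝ³×ℝ³} (K₂(|x−y|)/|x−y|²) (ξ(x) − ξ(y))² |φ(x)| |φ(y)| dx dy. (For φ ∈ H^{1/2}(ℝ³), the left-hand side equals Re⟨ξφ, [ξ, T]φ⟩ with T = √(−Δ+1) − 1, by Lieb's kernel representation of the pseudo-relativistic kinetic energy.) -/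

import Mathlib

/- Commutator kernel identity and bound (Lemma lem_exp_06 in kernel form):
`Q(ξ²φ, φ) − Q(ξφ, ξφ)
   = −(1/4π²) ∬ K₂(|x−y|)/|x−y|² (ξ(x)−ξ(y))² Re(conj(φ(x))φ(y)) dx dy`,
and the resulting bound with `|φ(x)||φ(y)|` on the right-hand side. -/

open MeasureTheory Real
noncomputable section

abbrev V3 := EuclideanSpace ℝ (Fin 3)

/-- The modified Bessel function of the second kind of order 2. -/
def K2 (r : ℝ) : ℝ := ∫ t in Set.Ioi (0:ℝ), Real.exp (-(r * Real.cosh t)) * Real.cosh (2*t)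

/-- The kernel energy form
`Q(f,g) := (1/4π²) ∬ K₂(|x−y|)/|x−y|² Re[conj(f(x)−f(y))(g(x)−g(y))] dx dy`. -/
def Qker (f g : V3 → ℂ) : ℝ :=
  (1/(4*π^2)) * ∫ p : V3 × V3, (K2 ‖p.1 - p.2‖ / ‖p.1 - p.2‖^2) *
    ((starRingEnd ℂ) (f p.1 - f p.2) * (g p.1 - g p.2)).re

lemma K2_nonneg (r : ℝ) : 0 ≤ K2 r := by
  apply integral_nonneg
  intro t
  positivity

lemma ptwise (a b : ℝ) (u v : ℂ) :
    ((starRingEnd ℂ) ((a^2:ℝ) * u - (b^2:ℝ) * v) * (u - v)).re -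
      ((starRingEnd ℂ) ((a:ℝ) * u - (b:ℝ) * v) * ((a:ℝ) * u - (b:ℝ) * v)).re
    = -((a - b)^2 * ((starRingEnd ℂ) u * v).re) := by
  simp only [Complex.mul_re, Complex.mul_im, Complex.sub_re, Complex.sub_im,
    Complex.conj_re, Complex.conj_im, Complex.ofReal_re, Complex.ofReal_im]
  ring

theorem commutator_kernel_identity_and_bound
    (ξ : V3 → ℝ) (hξ : ContDiff ℝ 1 ξ) (hbd : ∃ Cb, ∀ x, |ξ x| ≤ Cb)
    (φ : V3 → ℂ) (hφ : Measurable φ)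
    (h1 : Integrable (fun p : V3 × V3 => (K2 ‖p.1 - p.2‖ / ‖p.1 - p.2‖^2) *
      ((starRingEnd ℂ) (((ξ p.1)^2 : ℝ) * φ p.1 - ((ξ p.2)^2 : ℝ) * φ p.2) *
        (φ p.1 - φ p.2)).re))
    (h2 : Integrable (fun p : V3 × V3 => (K2 ‖p.1 - p.2‖ / ‖p.1 - p.2‖^2) *
      ((starRingEnd ℂ) ((ξ p.1 : ℝ) * φ p.1 - (ξ p.2 : ℝ) * φ p.2) *
        ((ξ p.1 : ℝ) * φ p.1 - (ξ p.2 : ℝ) * φ p.2)).re))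
    (h3 : Integrable (fun p : V3 × V3 => (K2 ‖p.1 - p.2‖ / ‖p.1 - p.2‖^2) *
      (ξ p.1 - ξ p.2)^2 * ((starRingEnd ℂ) (φ p.1) * φ p.2).re))
    (h4 : Integrable (fun p : V3 × V3 => (K2 ‖p.1 - p.2‖ / ‖p.1 - p.2‖^2) *
      (ξ p.1 - ξ p.2)^2 * (‖φ p.1‖ * ‖φ p.2‖))) :
    Qker (fun x => ((ξ x)^2 : ℝ) * φ x) φ
        - Qker (fun x => (ξ x : ℝ) * φ x) (fun x => (ξ x : ℝ) * φ x)
      = -(1/(4*π^2)) * ∫ p : V3 × V3, (K2 ‖p.1 - p.2‖ / ‖p.1 - p.2‖^2) *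
          (ξ p.1 - ξ p.2)^2 * ((starRingEnd ℂ) (φ p.1) * φ p.2).re ∧
    |Qker (fun x => ((ξ x)^2 : ℝ) * φ x) φ
        - Qker (fun x => (ξ x : ℝ) * φ x) (fun x => (ξ x : ℝ) * φ x)|
      ≤ (1/(4*π^2)) * ∫ p : V3 × V3, (K2 ‖p.1 - p.2‖ / ‖p.1 - p.2‖^2) *
          (ξ p.1 - ξ p.2)^2 * (‖φ p.1‖ * ‖φ p.2‖) := by
  have hkn : ∀ p : V3 × V3, 0 ≤ K2 ‖p.1 - p.2‖ / ‖p.1 - p.2‖^2 := fun p =>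
    div_nonneg (K2_nonneg _) (sq_nonneg _)
  have key : Qker (fun x => ((ξ x)^2 : ℝ) * φ x) φ
        - Qker (fun x => (ξ x : ℝ) * φ x) (fun x => (ξ x : ℝ) * φ x)
      = -(1/(4*π^2)) * ∫ p : V3 × V3, (K2 ‖p.1 - p.2‖ / ‖p.1 - p.2‖^2) *
          (ξ p.1 - ξ p.2)^2 * ((starRingEnd ℂ) (φ p.1) * φ p.2).re := by
    unfold Qker
    rw [← mul_sub, ← integral_sub h1 h2]
    have : ∀ p : V3 × V3,
        ((K2 ‖p.1 - p.2‖ / ‖p.1 - p.2‖^2) *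
          ((starRingEnd ℂ) (((ξ p.1)^2 : ℝ) * φ p.1 - ((ξ p.2)^2 : ℝ) * φ p.2) *
            (φ p.1 - φ p.2)).re -
         (K2 ‖p.1 - p.2‖ / ‖p.1 - p.2‖^2) *
          ((starRingEnd ℂ) ((ξ p.1 : ℝ) * φ p.1 - (ξ p.2 : ℝ) * φ p.2) *
            ((ξ p.1 : ℝ) * φ p.1 - (ξ p.2 : ℝ) * φ p.2)).re)
        = -((K2 ‖p.1 - p.2‖ / ‖p.1 - p.2‖^2) *
            (ξ p.1 - ξ p.2)^2 * ((starRingEnd ℂ) (φ p.1) * φ p.2).re) := by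
      intro p
      rw [← mul_sub, ptwise]
      ring
    rw [integral_congr_ae (Filter.Eventually.of_forall this), integral_neg]
    ring
  refine ⟨key, ?_⟩
  rw [key]
  have hπ : (0:ℝ) < 1/(4*π^2) := by positivity
  rw [abs_mul, abs_neg, abs_of_pos hπ]
  apply mul_le_mul_of_nonneg_left _ hπ.le
  calc |∫ p : V3 × V3, (K2 ‖p.1 - p.2‖ / ‖p.1 - p.2‖^2) *
          (ξ p.1 - ξ p.2)^2 * ((starRingEnd ℂ) (φ p.1) * φ p.2).re|
      ≤ ∫ p : V3 × V3, |(K2 ‖p.1 - p.2‖ / ‖p.1 - p.2‖^2) *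
          (ξ p.1 - ξ p.2)^2 * ((starRingEnd ℂ) (φ p.1) * φ p.2).re| :=
        (by
          have := norm_integral_le_integral_norm
            (f := fun p : V3 × V3 => (K2 ‖p.1 - p.2‖ / ‖p.1 - p.2‖^2) *
              (ξ p.1 - ξ p.2)^2 * ((starRingEnd ℂ) (φ p.1) * φ p.2).re) (μ := volume)
          simpa only [Real.norm_eq_abs] using this)
    _ ≤ ∫ p : V3 × V3, (K2 ‖p.1 - p.2‖ / ‖p.1 - p.2‖^2) *
          (ξ p.1 - ξ p.2)^2 * (‖φ p.1‖ * ‖φ p.2‖) := by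
        apply integral_mono h3.abs h4
        intro p
        dsimp only
        rw [abs_mul, abs_mul, abs_of_nonneg (hkn p), abs_of_nonneg (sq_nonneg _)]
        apply mul_le_mul_of_nonneg_left _ (mul_nonneg (hkn p) (sq_nonneg _))
        calc |((starRingEnd ℂ) (φ p.1) * φ p.2).re|
            ≤ ‖(starRingEnd ℂ) (φ p.1) * φ p.2‖ := Complex.abs_re_le_norm _
          _ = ‖φ p.1‖ * ‖φ p.2‖ := by
              simp
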